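/- Let f : X → Y be a mapping between normed spaces, with Y partially ordered by a convex cone Y₊, and let x̄ ∈ X. Suppose that f is Y₊-convex and that 0 ∈ int ∂(y*∘f)(x̄) for some y* in the dual unit sphere S* with y* ∈ Y₊* (the interior taken in X*). Then f is strongly metrically subregular at x̄, and subreg f(x̄) ≤ 1 / intrad f(x̄), where intrad f(x̄) = sup{ρ > 0 : ρB* ⊆ ∂(y*∘f)(x̄) for some y* ∈ S* ∩ Y₊*}. -/

import Mathlib

open Filter Topology Metric Set

/-- Strong metric subregularity of a single-valued map between normed spaces at `xb`. -/
def IsStronglyMetricallySubregularMap {X Y : Type*}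
    [NormedAddCommGroup X] [NormedAddCommGroup Y] (f : X → Y) (xb : X) : Prop :=
  ∃ κ : ℝ, 0 ≤ κ ∧ ∃ r : ℝ, 0 < r ∧ ∀ x ∈ Metric.closedBall xb r,
    ‖x - xb‖ ≤ κ * ‖f x - f xb‖

/-- The modulus of subregularity of a single-valued map. -/
noncomputable def subregModMap {X Y : Type*}
    [NormedAddCommGroup X] [NormedAddCommGroup Y] (f : X → Y) (xb : X) : ℝ :=
  sInf {κ : ℝ | 0 ≤ κ ∧ ∃ r : ℝ, 0 < r ∧ ∀ x ∈ Metric.closedBall xb r,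
    ‖x - xb‖ ≤ κ * ‖f x - f xb‖}

/-- The convex subdifferential of a real-valued function `ψ` at `xb`. -/
def convexSubdiffR {X : Type*} [NormedAddCommGroup X] [NormedSpace ℝ X]
    (ψ : X → ℝ) (xb : X) : Set (StrongDual ℝ X) :=
  {p | ∀ x : X, ψ xb + p (x - xb) ≤ ψ x}

/-- `intrad f(xb) = sup{ρ > 0 : ρ·B* ⊆ ∂(y*∘f)(xb) for some y* ∈ S* ∩ Y₊*}`. -/
noncomputable def intrad {X Y : Type*}
    [NormedAddCommGroup X] [NormedSpace ℝ X] [NormedAddCommGroup Y] [NormedSpace ℝ Y]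
    (C : Set Y) (f : X → Y) (xb : X) : ℝ :=
  sSup {ρ : ℝ | 0 < ρ ∧ ∃ q : StrongDual ℝ Y, ‖q‖ = 1 ∧ (∀ y ∈ C, 0 ≤ q y) ∧
    ∀ p : StrongDual ℝ X, ‖p‖ ≤ ρ → p ∈ convexSubdiffR (fun x => q (f x)) xb}

/-- If `f : X → Y` is `Y₊`-convex (w.r.t. a convex cone `C = Y₊`) and
`0 ∈ int ∂(y*∘f)(xb)` for some `y*` in the dual unit sphere with `y* ∈ Y₊*`, then `f`
is strongly metrically subregular at `xb` and `subreg f(xb) ≤ 1/intrad f(xb)`. -/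
theorem strong_subreg_of_scalarization {X Y : Type*}
    [NormedAddCommGroup X] [NormedSpace ℝ X] [NormedAddCommGroup Y] [NormedSpace ℝ Y]
    (C : Set Y) (hCconv : Convex ℝ C) (hCcone : ∀ c : ℝ, 0 < c → ∀ y ∈ C, c • y ∈ C)
    (f : X → Y) (xb : X)
    (hfconv : ∀ x₁ x₂ : X, ∀ t : ℝ, 0 ≤ t → t ≤ 1 →
      t • f x₁ + (1 - t) • f x₂ - f (t • x₁ + (1 - t) • x₂) ∈ C)
    (hq : ∃ q : StrongDual ℝ Y, ‖q‖ = 1 ∧ (∀ y ∈ C, 0 ≤ q y) ∧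
      (0 : StrongDual ℝ X) ∈ interior (convexSubdiffR (fun x => q (f x)) xb)) :
    IsStronglyMetricallySubregularMap f xb ∧
    subregModMap f xb ≤ 1 / intrad C f xb := by
  classical
  obtain ⟨q, hq1, hqC, hqint⟩ := hq
  rw [mem_interior_iff_mem_nhds, Metric.mem_nhds_iff] at hqint
  obtain ⟨ε, hε, hball⟩ := hqint
  set T := {ρ : ℝ | 0 < ρ ∧ ∃ q : StrongDual ℝ Y, ‖q‖ = 1 ∧ (∀ y ∈ C, 0 ≤ q y) ∧
    ∀ p : StrongDual ℝ X, ‖p‖ ≤ ρ → p ∈ convexSubdiffR (fun x => q (f x)) xb} with hT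
  have hρT : ε / 2 ∈ T := by
    refine ⟨by linarith, q, hq1, hqC, fun p hp => hball ?_⟩
    simp only [Metric.mem_ball, dist_eq_norm, sub_zero]
    linarith
  have key : ∀ ρ ∈ T, ∀ x : X, ρ * ‖x - xb‖ ≤ ‖f x - f xb‖ := by
    rintro ρ ⟨hρ, q', hq'1, hq'C, hsub⟩ x
    by_cases hx : x = xb
    · simp [hx]
    · obtain ⟨g, hg1, hgx⟩ := exists_dual_vector ℝ (x - xb) (norm_ne_zero_iff.2 (sub_ne_zero.2 hx))
      have hp : ‖(ρ • g : StrongDual ℝ X)‖ ≤ ρ := by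
        rw [norm_smul ρ g, hg1, mul_one, Real.norm_eq_abs, abs_of_pos hρ]
      have h1 := hsub _ hp x
      simp only [convexSubdiffR, Set.mem_setOf_eq] at hsub
      have h2 : q' (f xb) + ρ * ‖x - xb‖ ≤ q' (f x) := by
        have hgx' : (ρ • g) (x - xb) = ρ * ‖x - xb‖ := by
          simp only [ContinuousLinearMap.smul_apply, smul_eq_mul]
          rw [hgx]; norm_num
        simpa [hgx'] using h1
      calc ρ * ‖x - xb‖ ≤ q' (f x) - q' (f xb) := by linarith
        _ = q' (f x - f xb) := by rw [map_sub]
        _ ≤ ‖q'‖ * ‖f x - f xb‖ := (le_abs_self _).trans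
            (by simpa [Real.norm_eq_abs] using q'.le_opNorm (f x - f xb))
        _ = ‖f x - f xb‖ := by rw [hq'1, one_mul]
  set S := {κ : ℝ | 0 ≤ κ ∧ ∃ r : ℝ, 0 < r ∧ ∀ x ∈ Metric.closedBall xb r,
    ‖x - xb‖ ≤ κ * ‖f x - f xb‖} with hS
  have hSbdd : BddBelow S := ⟨0, fun κ hκ => hκ.1⟩
  have hmem : ∀ ρ ∈ T, 1 / ρ ∈ S := by
    intro ρ hρ'
    have hρ := hρ'.1
    refine ⟨by positivity, 1, one_pos, fun x _ => ?_⟩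
    have h := key ρ hρ' x
    rw [one_div, ← div_eq_inv_mul, le_div_iff₀ hρ, mul_comm]
    exact h
  have hsmsr : IsStronglyMetricallySubregularMap f xb := by
    obtain ⟨h0, r, hr, hx⟩ := hmem _ hρT
    exact ⟨1 / (ε / 2), h0, r, hr, hx⟩
  refine ⟨hsmsr, ?_⟩
  show sInf S ≤ 1 / sSup T
  by_cases hbdd : BddAbove T
  · have hM : 0 < sSup T := lt_of_lt_of_le (by linarith) (le_csSup hbdd hρT)
    have h1M : 1 / sSup T ∈ S := by
      refine ⟨by positivity, 1, one_pos, fun x _ => ?_⟩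
      by_cases hx : x = xb
      · simp [hx]
      · have hxn : 0 < ‖x - xb‖ := norm_pos_iff.2 (sub_ne_zero.2 hx)
        have hsup : sSup T ≤ ‖f x - f xb‖ / ‖x - xb‖ := by
          refine csSup_le ⟨_, hρT⟩ (fun ρ hρ => ?_)
          rw [le_div_iff₀ hxn]
          exact key ρ hρ x
        rw [one_div, ← div_eq_inv_mul, le_div_iff₀ hM, mul_comm]
        calc sSup T * ‖x - xb‖ ≤ (‖f x - f xb‖ / ‖x - xb‖) * ‖x - xb‖ :=
              mul_le_mul_of_nonneg_right hsup (le_of_lt hxn)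
          _ = ‖f x - f xb‖ := by field_simp
    exact csInf_le hSbdd h1M
  · rw [Real.sSup_of_not_bddAbove hbdd]
    have hX : ∀ x : X, x = xb := by
      intro x
      by_contra hx
      have hxn : 0 < ‖x - xb‖ := norm_pos_iff.2 (sub_ne_zero.2 hx)
      exact hbdd ⟨‖f x - f xb‖ / ‖x - xb‖, fun ρ hρ => by
        rw [le_div_iff₀ hxn]; exact key ρ hρ x⟩
    have h0S : (0 : ℝ) ∈ S := ⟨le_refl 0, 1, one_pos, fun x _ => by
      rw [hX x]; simp⟩
    simpa using csInf_le hSbdd h0S
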